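/- Let G be a group and let 𝒜 be a collection of subgroups of G satisfying: (1) for every A ∈ 𝒜 and every g ∈ G, the conjugate g⁻¹Ag belongs to 𝒜 and there is a finite sequence A = A₀, A₁, …, A_n = g⁻¹Ag of subgroups in 𝒜 such that A_{j−1} ∩ A_j is infinite for each j; and (2) for every A ∈ 𝒜, every subgroup of A that has finite height in A is either finite or of finite index in A. Then for every finite height subgroup H of G of infinite index in G, the intersection H ∩ A is finite for all A ∈ 𝒜. -/

import Mathlib

open scoped Pointwise ENNReal

namespace RACGPaper

/-- The defining relations of the right-angled Coxeter group of a simple graph. -/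
def racgRels {V : Type*} (Γ : SimpleGraph V) : Set (FreeGroup V) :=
  {r | (∃ v : V, r = FreeGroup.of v * FreeGroup.of v) ∨
       (∃ v w : V, Γ.Adj v w ∧ r = (FreeGroup.of v * FreeGroup.of w) ^ 2)}

/-- The right-angled Coxeter group of a simple graph. -/
def RACG {V : Type*} (Γ : SimpleGraph V) : Type _ := PresentedGroup (racgRels Γ)

instance {V : Type*} (Γ : SimpleGraph V) : Group (RACG Γ) :=
  inferInstanceAs (Group (PresentedGroup (racgRels Γ)))

/-- The generator of `RACG Γ` corresponding to a vertex. -/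
def gen {V : Type*} (Γ : SimpleGraph V) (v : V) : RACG Γ := PresentedGroup.of v

/-- Word length with respect to the vertex generators (which are involutions). -/
noncomputable def len {V : Type*} (Γ : SimpleGraph V) (g : RACG Γ) : ℕ :=
  sInf {n | ∃ l : List V, l.length = n ∧ (l.map (gen Γ)).prod = g}

/-- The word metric on `RACG Γ`. -/
noncomputable def wdist {V : Type*} (Γ : SimpleGraph V) (g h : RACG Γ) : ℕ :=
  len Γ (g⁻¹ * h)

/-- Distance from a point to a subgroup. -/
noncomputable def distH {V : Type*} (Γ : SimpleGraph V) (H : Subgroup (RACG Γ))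
    (x : RACG Γ) : ℕ :=
  sInf {n | ∃ h ∈ H, wdist Γ x h = n}

/-- A `(K, C)`-quasi-geodesic defined on the integer interval `[a, b]`. -/
def IsQuasiGeodesic {V : Type*} (Γ : SimpleGraph V) (K C : ℝ) (a b : ℤ)
    (γ : ℤ → RACG Γ) : Prop :=
  ∀ i ∈ Set.Icc a b, ∀ j ∈ Set.Icc a b,
    |(i : ℝ) - (j : ℝ)| / K - C ≤ (wdist Γ (γ i) (γ j) : ℝ) ∧
    (wdist Γ (γ i) (γ j) : ℝ) ≤ K * |(i : ℝ) - (j : ℝ)| + C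

/-- A subgroup is strongly quasiconvex if every quasi-geodesic with endpoints on it
stays uniformly close to it. -/
def StronglyQuasiconvex {V : Type*} (Γ : SimpleGraph V) (H : Subgroup (RACG Γ)) : Prop :=
  ∀ K C : ℝ, 1 ≤ K → 0 ≤ C → ∃ M : ℝ, 0 ≤ M ∧
    ∀ (a b : ℤ) (γ : ℤ → RACG Γ), IsQuasiGeodesic Γ K C a b γ →
      γ a ∈ H → γ b ∈ H → ∀ i ∈ Set.Icc a b, (distH Γ H (γ i) : ℝ) ≤ M

/-- `H` is malnormal: `gHg⁻¹ ∩ H = {1}` for every `g ∉ H`. -/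
def Malnormal {G : Type*} [Group G] (H : Subgroup G) : Prop :=
  ∀ g : G, g ∉ H → ∀ x : G, x ∈ H → g⁻¹ * x * g ∈ H → x = 1

/-- `H` is almost malnormal: `gHg⁻¹ ∩ H` is finite for every `g ∉ H`. -/
def AlmostMalnormal {G : Type*} [Group G] (H : Subgroup G) : Prop :=
  ∀ g : G, g ∉ H → {x : G | x ∈ H ∧ g⁻¹ * x * g ∈ H}.Finite

/-- An almost malnormal collection of subgroups. -/
def AlmostMalnormalColl {G : Type*} [Group G] (𝓗 : Set (Subgroup G)) : Prop :=
  ∀ H ∈ 𝓗, ∀ H' ∈ 𝓗, ∀ g : G,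
    {x : G | x ∈ H ∧ g⁻¹ * x * g ∈ (H' : Subgroup G)}.Infinite → H = H' ∧ g ∈ H

/-- A group is virtually free if it has a free subgroup of finite index. -/
def VirtuallyFree (G : Type*) [Group G] : Prop :=
  ∃ F : Subgroup G, F.FiniteIndex ∧ IsFreeGroup F

/-- A set of vertices spans a join subgraph. -/
def IsJoin {V : Type*} (Γ : SimpleGraph V) (J : Set V) : Prop :=
  ∃ V₁ V₂ : Set V, V₁.Nonempty ∧ V₂.Nonempty ∧ Disjoint V₁ V₂ ∧ V₁ ∪ V₂ = J ∧
    ∀ v ∈ V₁, ∀ w ∈ V₂, Γ.Adj v w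

/-- The special subgroup generated by a set of vertices. -/
def special {V : Type*} (Γ : SimpleGraph V) (S₁ : Set V) : Subgroup (RACG Γ) :=
  Subgroup.closure (gen Γ '' S₁)

/-- The conjugate subgroup `gHg⁻¹`. -/
def conjSubgroup {G : Type*} [Group G] (g : G) (H : Subgroup G) : Subgroup G :=
  H.map (MulAut.conj g).toMonoidHom

/-- `x` lies in some join subgroup of `RACG Γ`. -/
def InJoinSubgroup {V : Type*} (Γ : SimpleGraph V) (x : RACG Γ) : Prop :=
  ∃ J : Set V, IsJoin Γ J ∧ x ∈ special Γ J

/-- An infinite subgroup is join-free if none of its infinite-order elements is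
conjugate into a join subgroup. -/
def JoinFree {V : Type*} (Γ : SimpleGraph V) (H : Subgroup (RACG Γ)) : Prop :=
  (H : Set (RACG Γ)).Infinite ∧
    ∀ h ∈ H, ¬ IsOfFinOrder h → ∀ g : RACG Γ, ¬ InJoinSubgroup Γ (g * h * g⁻¹)

/-- The star of a vertex: the vertex together with its neighbours. -/
def starSet {V : Type*} (Γ : SimpleGraph V) (v : V) : Set V :=
  {v} ∪ {w | Γ.Adj v w}

/-- `x` lies in some star subgroup of `RACG Γ`. -/
def InStarSubgroup {V : Type*} (Γ : SimpleGraph V) (x : RACG Γ) : Prop :=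
  ∃ v : V, x ∈ special Γ (starSet Γ v)

/-- An infinite subgroup is star-free if none of its infinite-order elements is
conjugate into a star subgroup. -/
def StarFree {V : Type*} (Γ : SimpleGraph V) (H : Subgroup (RACG Γ)) : Prop :=
  (H : Set (RACG Γ)).Infinite ∧
    ∀ h ∈ H, ¬ IsOfFinOrder h → ∀ g : RACG Γ, ¬ InStarSubgroup Γ (g * h * g⁻¹)

/-- Word length with respect to a (symmetrized) set `T` of group elements. -/
noncomputable def wlen {G : Type*} [Group G] (T : Set G) (g : G) : ℕ :=
  sInf {n | ∃ l : List G, (∀ x ∈ l, x ∈ T ∨ x⁻¹ ∈ T) ∧ l.length = n ∧ l.prod = g}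

/-- A finitely generated subgroup of `RACG Γ` is undistorted if the inclusion is a
quasi-isometric embedding with respect to word metrics. -/
def Undistorted {V : Type*} (Γ : SimpleGraph V) (H : Subgroup (RACG Γ)) : Prop :=
  ∃ T : Finset (RACG Γ), (T : Set (RACG Γ)) ⊆ (H : Set (RACG Γ)) ∧
    Subgroup.closure (T : Set (RACG Γ)) = H ∧
    ∃ K C : ℝ, 1 ≤ K ∧ 0 ≤ C ∧ ∀ h ∈ H,
      (wlen (T : Set (RACG Γ)) h : ℝ) / K - C ≤ (len Γ h : ℝ) ∧
      (len Γ h : ℝ) ≤ K * (wlen (T : Set (RACG Γ)) h : ℝ) + C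

/-- A subgroup is stable if it is undistorted and quasi-geodesics with common
endpoints on it uniformly fellow-travel. -/
def Stable {V : Type*} (Γ : SimpleGraph V) (H : Subgroup (RACG Γ)) : Prop :=
  Undistorted Γ H ∧ ∀ K C : ℝ, 1 ≤ K → 0 ≤ C → ∃ M : ℝ, 0 ≤ M ∧
    ∀ (a b a' b' : ℤ) (γ γ' : ℤ → RACG Γ),
      IsQuasiGeodesic Γ K C a b γ → IsQuasiGeodesic Γ K C a' b' γ' →
      γ a = γ' a' → γ b = γ' b' → γ a ∈ H → γ b ∈ H →
      (∀ i ∈ Set.Icc a b, ∃ j ∈ Set.Icc a' b', (wdist Γ (γ i) (γ' j) : ℝ) ≤ M) ∧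
      (∀ j ∈ Set.Icc a' b', ∃ i ∈ Set.Icc a b, (wdist Γ (γ i) (γ' j) : ℝ) ≤ M)

/-- `H` is `N`-join-busting: every join subword of a reduced word representing an
element of `H` has length at most `N`. -/
def JoinBusting {V : Type*} (Γ : SimpleGraph V) (H : Subgroup (RACG Γ)) (N : ℕ) : Prop :=
  ∀ h ∈ H, ∀ w : List V, (w.map (gen Γ)).prod = h → w.length = len Γ h →
    ∀ β : List V, β <:+: w → InJoinSubgroup Γ (β.map (gen Γ)).prod → β.length ≤ N

/-- `a b c d` is an induced four-cycle (in this cyclic order), with diagonals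
`(a, c)` and `(b, d)`. -/
def IsInducedFourCycle {V : Type*} (Γ : SimpleGraph V) (a b c d : V) : Prop :=
  a ≠ c ∧ b ≠ d ∧ ¬ Γ.Adj a c ∧ ¬ Γ.Adj b d ∧
    Γ.Adj a b ∧ Γ.Adj b c ∧ Γ.Adj c d ∧ Γ.Adj d a

/-- A set of vertices is the vertex set of an induced four-cycle. -/
def IsFourCycleSet {V : Type*} (Γ : SimpleGraph V) (Q : Set V) : Prop :=
  ∃ a b c d : V, Q = {a, b, c, d} ∧ IsInducedFourCycle Γ a b c d

/-- The four-cycle graph `Γ⁴`: vertices are induced four-cycles of `Γ`, adjacent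
when they share a pair of non-adjacent vertices. -/
def fourCycleGraph {V : Type*} (Γ : SimpleGraph V) :
    SimpleGraph {Q : Set V // IsFourCycleSet Γ Q} :=
  SimpleGraph.fromRel (fun Q Q' => ∃ u v : V, u ≠ v ∧ ¬ Γ.Adj u v ∧
    u ∈ (Q : Set V) ∩ (Q' : Set V) ∧ v ∈ (Q : Set V) ∩ (Q' : Set V))

/-- A connected component of `Γ⁴` whose support is the whole vertex set of `Γ`. -/
def FullSupportComponent {V : Type*} (Γ : SimpleGraph V)
    (C : (fourCycleGraph Γ).ConnectedComponent) : Prop :=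
  ∀ v : V, ∃ Q : {Q : Set V // IsFourCycleSet Γ Q},
    (fourCycleGraph Γ).connectedComponentMk Q = C ∧ v ∈ (Q : Set V)

/-- `Γ` is CFS: some component of `Γ⁴` has full support. -/
def CFS {V : Type*} (Γ : SimpleGraph V) : Prop :=
  ∃ C : (fourCycleGraph Γ).ConnectedComponent, FullSupportComponent Γ C

/-- Length (number of edges) of a shortest edge path from `x` to `y` in the Cayley
graph all of whose vertices are at distance at least `c` from `H`. -/
noncomputable def avoidDist {V : Type*} (Γ : SimpleGraph V) (H : Subgroup (RACG Γ))
    (c : ℝ) (x y : RACG Γ) : ℝ≥0∞ :=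
  ⨅ (l : List (RACG Γ)) (_ : l.head? = some x) (_ : l.getLast? = some y)
    (_ : l.Chain' fun a b => wdist Γ a b = 1)
    (_ : ∀ z ∈ l, c ≤ (distH Γ H z : ℝ)), ((l.length - 1 : ℕ) : ℝ≥0∞)

/-- The subgroup divergence functions `σⁿ_ρ` of `H` in `RACG Γ`. -/
noncomputable def divFun {V : Type*} (Γ : SimpleGraph V) (H : Subgroup (RACG Γ))
    (ρ : ℝ) (n : ℕ) (r : ℝ) : ℝ≥0∞ :=
  ⨅ (x : RACG Γ) (y : RACG Γ) (_ : (distH Γ H x : ℝ) = r)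
    (_ : (distH Γ H y : ℝ) = r) (_ : avoidDist Γ H r x y ≠ ⊤)
    (_ : (n : ℝ) * r ≤ (wdist Γ x y : ℝ)), avoidDist Γ H (ρ * r) x y

/-- Domination of functions: `f(x) ≤ A g(Bx) + Cx` for large `x`. -/
def FunDom (f g : ℝ → ℝ≥0∞) : Prop :=
  ∃ A B C D : ℝ, 0 < A ∧ 0 < B ∧ 0 < C ∧ 0 < D ∧
    ∀ x : ℝ, D < x → f x ≤ ENNReal.ofReal A * g (B * x) + ENNReal.ofReal (C * x)

/-- Domination of families of divergence functions. -/
def FamDom (δ δ' : ℝ → ℕ → ℝ → ℝ≥0∞) : Prop :=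
  ∃ L : ℝ, L ∈ Set.Ioc (0 : ℝ) 1 ∧ ∃ M : ℕ, 0 < M ∧
    ∀ ρ ∈ Set.Ioc (0 : ℝ) 1, ∀ n : ℕ, 2 ≤ n → FunDom (δ (L * ρ) n) (δ' ρ (M * n))

/-- A family of divergence functions is equivalent to a single function. -/
def FamEquivFun (δ : ℝ → ℕ → ℝ → ℝ≥0∞) (f : ℝ → ℝ≥0∞) : Prop :=
  FamDom δ (fun _ _ => f) ∧ FamDom (fun _ _ => f) δ

/-- Height at most `n`: any `n+1` pairwise distinct cosets give conjugates with
finite total intersection. -/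
def HeightAtMost {G : Type*} [Group G] (H : Subgroup G) (n : ℕ) : Prop :=
  ∀ f : Fin (n + 1) → G, (∀ i j, i ≠ j → (f i)⁻¹ * f j ∉ H) →
    {x : G | ∀ i, (f i)⁻¹ * x * f i ∈ H}.Finite

/-- `H` has finite height in `G`. -/
def FiniteHeight {G : Type*} [Group G] (H : Subgroup G) : Prop :=
  ∃ n : ℕ, HeightAtMost H n

end RACGPaper

section Helpers

open RACGPaper Subgroup


variable {G : Type*} [Group G]

lemma RACGAux.mem_conjSubgroup (g x : G) (H : Subgroup G) :
    x ∈ conjSubgroup g H ↔ g⁻¹ * x * g ∈ H := by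
  constructor
  · rintro ⟨h, hh, rfl⟩
    simpa [mul_assoc] using hh
  · intro hx
    refine ⟨g⁻¹ * x * g, hx, ?_⟩
    simp [MulAut.conj, mul_assoc]

lemma RACGAux.conjSubgroup_eq_comap (g : G) (H : Subgroup G) :
    conjSubgroup g H = H.comap ((MulAut.conj g⁻¹).toMonoidHom) := by
  ext x
  rw [RACGAux.mem_conjSubgroup]
  simp [MulAut.conj]

lemma RACGAux.conjSubgroup_conjSubgroup (g : G) (A : Subgroup G) :
    conjSubgroup g (conjSubgroup g⁻¹ A) = A := by
  ext x
  rw [RACGAux.mem_conjSubgroup, RACGAux.mem_conjSubgroup]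
  constructor
  · intro h; simpa [mul_assoc] using h
  · intro h; simpa [mul_assoc] using h

lemma RACGAux.relindex_conj (g : G) (K L : Subgroup G) :
    (conjSubgroup g K).relIndex (conjSubgroup g L) = K.relIndex L := by
  rw [RACGAux.conjSubgroup_eq_comap, RACGAux.conjSubgroup_eq_comap, relIndex_comap,
    map_comap_eq_self_of_surjective]
  exact (MulAut.conj g⁻¹).surjective

lemma RACGAux.subgroupOf_coe_eq (H B : Subgroup G) :
    ((H.subgroupOf B : Subgroup B) : Set B)
      = (Subtype.val : B → G) ⁻¹' ((H : Set G) ∩ (B : Set G)) := by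
  ext x
  simp [Subgroup.mem_subgroupOf, x.2]

lemma RACGAux.val_image_subgroupOf (H B : Subgroup G) :
    (Subtype.val : B → G) '' ((H.subgroupOf B : Subgroup B) : Set B)
      = (H : Set G) ∩ (B : Set G) := by
  ext x
  constructor
  · rintro ⟨⟨y, hyB⟩, hy, rfl⟩
    exact ⟨(Subgroup.mem_subgroupOf.mp hy), hyB⟩
  · rintro ⟨hxH, hxB⟩
    exact ⟨⟨x, hxB⟩, Subgroup.mem_subgroupOf.mpr hxH, rfl⟩

lemma RACGAux.heightAtMost_subgroupOf {H : Subgroup G} (B : Subgroup G) {n : ℕ}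
    (h : HeightAtMost H n) : HeightAtMost (H.subgroupOf B) n := by
  intro f hf
  have hfin := h (fun i => (f i : G)) (fun i j hij hmem => hf i j hij
    (Subgroup.mem_subgroupOf.mpr (by push_cast; exact hmem)))
  have hsub : {x : ↥B | ∀ i, (f i)⁻¹ * x * f i ∈ H.subgroupOf B}
      ⊆ (Subtype.val : B → G) ⁻¹' {x : G | ∀ i, (f i : G)⁻¹ * x * (f i : G) ∈ H} := by
    intro x hx i
    have := Subgroup.mem_subgroupOf.mp (hx i)
    push_cast at this
    exact this
  exact (hfin.preimage Subtype.val_injective.injOn).subset hsub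

lemma RACGAux.infinite_coe_of_finiteIndex {A : Type*} [Group A] [Infinite A]
    (D : Subgroup A) (hD : D.FiniteIndex) : ((D : Set A)).Infinite := by
  intro hfin
  have h1 : Finite D := hfin.to_subtype
  have h2 : Finite (A ⧸ D) := D.finite_quotient_of_finiteIndex
  have : Finite A := Finite.of_equiv _ (Subgroup.groupEquivQuotientProdSubgroup (s := D)).symm
  exact not_finite A

lemma RACGAux.inf_infinite {A : Type*} [Group A] (K S : Subgroup A) (hK : K.FiniteIndex)
    (hS : (S : Set A).Infinite) : ((K : Set A) ∩ (S : Set A)).Infinite := by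
  have : Infinite S := hS.to_subtype
  have hKS : (K.subgroupOf S).FiniteIndex :=
    ⟨fun h => hK.index_ne_zero (Subgroup.index_eq_zero_of_relIndex_eq_zero h)⟩
  have h2 := RACGAux.infinite_coe_of_finiteIndex (K.subgroupOf S) hKS
  have himg := h2.image (Set.injOn_of_injective Subtype.val_injective)
  have hsub : (Subtype.val : S → A) '' ((K.subgroupOf S : Subgroup S) : Set S)
      ⊆ (K : Set A) ∩ (S : Set A) := by
    rw [RACGAux.val_image_subgroupOf]
  exact himg.mono hsub

end Helpers


open RACGPaper in
/-- under conditions (1) and (2) on the collection `𝒜`, every finite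
height subgroup of infinite index meets each member of `𝒜` in a finite set. -/
theorem finiteHeight_infiniteIndex_finite_intersection
    {G : Type*} [Group G] (𝒜 : Set (Subgroup G))
    (h1 : ∀ A ∈ 𝒜, ∀ g : G, conjSubgroup g⁻¹ A ∈ 𝒜 ∧
        ∃ l : List (Subgroup G), (∀ B ∈ l, B ∈ 𝒜) ∧ l.head? = some A ∧
          l.getLast? = some (conjSubgroup g⁻¹ A) ∧
          l.Chain' fun B B' => ((B : Set G) ∩ (B' : Set G)).Infinite)
    (h2 : ∀ A ∈ 𝒜, ∀ B : Subgroup ↥A, FiniteHeight B →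
        (B : Set ↥A).Finite ∨ B.FiniteIndex)
    (H : Subgroup G) (hH : FiniteHeight H) (hInf : ¬ H.FiniteIndex) :
    ∀ A ∈ 𝒜, ((H : Set G) ∩ (A : Set G)).Finite := by
  intro A hA
  by_contra hcontra
  rw [← Set.not_infinite, not_not] at hcontra
  have key : ∀ B ∈ 𝒜, ((H : Set G) ∩ (B : Set G)).Infinite → (H.subgroupOf B).FiniteIndex := by
    intro B hB hinf
    obtain ⟨n, hn⟩ := hH
    rcases h2 B hB (H.subgroupOf B) ⟨n, RACGAux.heightAtMost_subgroupOf B hn⟩ with hfin | hfi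
    · exact absurd (by rw [← RACGAux.val_image_subgroupOf H B]; exact hfin.image _) hinf
    · exact hfi
  have step : ∀ B B' : Subgroup G, B' ∈ 𝒜 → ((H : Set G) ∩ (B : Set G)).Infinite →
      B ∈ 𝒜 → ((B : Set G) ∩ (B' : Set G)).Infinite → ((H : Set G) ∩ (B' : Set G)).Infinite := by
    intro B B' hB' hHB hB hBB'
    have hK : (H.subgroupOf B).FiniteIndex := key B hB hHB
    have hS : ((B'.subgroupOf B : Subgroup B) : Set ↥B).Infinite := by
      rw [RACGAux.subgroupOf_coe_eq]
      refine Set.Infinite.preimage ?_ ?_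
      · rw [Set.inter_comm]; exact hBB'
      · intro x hx
        rw [Subtype.range_coe_subtype]
        exact hx.2
    have hinter := RACGAux.inf_infinite (H.subgroupOf B) (B'.subgroupOf B) hK hS
    have himg := hinter.image (Set.injOn_of_injective Subtype.val_injective)
    refine himg.mono ?_
    rintro x ⟨y, ⟨hy1, hy2⟩, rfl⟩
    exact ⟨Subgroup.mem_subgroupOf.mp hy1, Subgroup.mem_subgroupOf.mp hy2⟩
  have chain : ∀ l : List (Subgroup G), (∀ B ∈ l, B ∈ 𝒜) →
      (l.Chain' fun B B' => ((B : Set G) ∩ (B' : Set G)).Infinite) →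
      ∀ B, l.head? = some B → ((H : Set G) ∩ (B : Set G)).Infinite →
      ∀ B', l.getLast? = some B' → ((H : Set G) ∩ (B' : Set G)).Infinite := by
    intro l
    induction l with
    | nil => intro _ _ B hB; simp at hB
    | cons B0 t ih =>
      intro hmem hch B hB hBinf B' hB'
      rw [List.head?_cons, Option.some_inj] at hB
      subst hB
      cases t with
      | nil =>
        simp only [List.getLast?_singleton, Option.some_inj] at hB'
        subst hB'
        exact hBinf
      | cons B1 t' =>
        have hrel : ((B0 : Set G) ∩ (B1 : Set G)).Infinite := (List.isChain_cons_cons.mp hch).1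
        have hch' := (List.isChain_cons_cons.mp hch).2
        have hB1 : ((H : Set G) ∩ (B1 : Set G)).Infinite :=
          step B0 B1 (hmem B1 (by simp)) hBinf (hmem B0 (by simp)) hrel
        refine ih (fun C hC => hmem C (List.mem_cons_of_mem _ hC)) hch' B1 rfl hB1 B' ?_
        rw [List.getLast?_cons_cons] at hB'
        exact hB'
  obtain ⟨n, hn⟩ := hH
  have hidx : H.index = 0 := by
    by_contra h0
    exact hInf ⟨h0⟩
  have hGQ : Infinite (G ⧸ H) := Subgroup.index_eq_zero_iff_infinite.mp hidx
  have emb := Infinite.natEmbedding (G ⧸ H)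
  set g : Fin (n + 1) → G := fun i => (emb i.val).out with hg
  have hdist : ∀ i j, i ≠ j → (g i)⁻¹ * g j ∉ H := by
    intro i j hij hmem
    apply hij
    have hq : (QuotientGroup.mk (g i) : G ⧸ H) = QuotientGroup.mk (g j) :=
      QuotientGroup.eq.mpr hmem
    have h2' : emb i.val = emb j.val := by
      rw [← QuotientGroup.out_eq' (emb i.val), ← QuotientGroup.out_eq' (emb j.val)]
      exact hq
    exact Fin.ext (emb.injective h2')
  have hT := hn g hdist
  have hDfi : ∀ i : Fin (n + 1), ((conjSubgroup (g i) H).subgroupOf A).FiniteIndex := by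
    intro i
    obtain ⟨hmem𝒜, l, hl𝒜, hhead, hlast, hchain⟩ := h1 A hA (g i)
    have hinf' : ((H : Set G) ∩ ((conjSubgroup (g i)⁻¹ A : Subgroup G) : Set G)).Infinite :=
      chain l hl𝒜 hchain A hhead hcontra _ hlast
    have hfi := key _ hmem𝒜 hinf'
    constructor
    intro h0
    apply hfi.index_ne_zero
    have heq := RACGAux.relindex_conj (g i) H (conjSubgroup (g i)⁻¹ A)
    rw [RACGAux.conjSubgroup_conjSubgroup] at heq
    show H.relIndex (conjSubgroup (g i)⁻¹ A) = 0
    rw [← heq]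
    exact h0
  have hAinf : Infinite ↥A := Set.infinite_coe_iff.mpr (hcontra.mono Set.inter_subset_right)
  have hD : (((⨅ i, (conjSubgroup (g i) H).subgroupOf A : Subgroup ↥A)) : Set ↥A).Infinite :=
    RACGAux.infinite_coe_of_finiteIndex _ (Subgroup.finiteIndex_iInf hDfi)
  have himg := hD.image (Set.injOn_of_injective Subtype.val_injective)
  refine (himg.mono ?_) hT
  rintro x ⟨y, hy, rfl⟩
  intro i
  have hyi : (y : G) ∈ conjSubgroup (g i) H :=
    Subgroup.mem_subgroupOf.mp ((Subgroup.mem_iInf).mp hy i)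
  exact (RACGAux.mem_conjSubgroup (g i) (y : G) H).mp hyi
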